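/- Let n ∈ ℕ, let B and B' be geometric structures on E := EuclideanSpace ℝ (Fin n), and let Φ : E → E be a C² geometromorphism from (E,B) to (E,B') with Jacobian determinant identically 1 (det (fderiv ℝ Φ x) = 1 for all x). Let F : E → ℝ be differentiable with a differentiable left-gradient field gF with respect to B', and let g be a differentiable left-gradient field of F ∘ Φ with respect to B. Then for every x, trace(fderiv ℝ g x) = trace(fderiv ℝ gF (Φ x)); that is, Δ^L_B (F ∘ Φ) = (Δ^L_{B'} F) ∘ Φ. The same identity holds for right-gradient fields and right Laplacians. -/

import Mathlib

open Function

/-- The identity matrix viewed as an element of the Pi type. -/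
noncomputable def idm (n : ℕ) : Fin n → Fin n → ℝ := fun i j => (1 : Matrix (Fin n) (Fin n) ℝ) i j

lemma of_idm {n : ℕ} : Matrix.of (idm n) = 1 := rfl

noncomputable def detCM (n : ℕ) :
    ContinuousMultilinearMap ℝ (fun _ : Fin n => (Fin n → ℝ)) ℝ where
  toMultilinearMap := (Matrix.detRowAlternating (n := Fin n) (R := ℝ)).toMultilinearMap
  cont := by
    have h : Continuous fun m : Fin n → Fin n → ℝ => (Matrix.of m).det :=
      Continuous.matrix_det (continuous_pi fun i => continuous_apply i)
    exact h

lemma detCM_apply {n : ℕ} (m : Fin n → Fin n → ℝ) : detCM n m = (Matrix.of m).det := rfl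

lemma detCM_linearDeriv_one {n : ℕ} (H : Fin n → Fin n → ℝ) :
    (detCM n).linearDeriv (idm n) H = Matrix.trace (Matrix.of H) := by
  rw [ContinuousMultilinearMap.linearDeriv_apply]
  have key : ∀ i : Fin n, detCM n (Function.update (idm n) i (H i)) = H i i := by
    intro i
    have hHi : H i = ∑ k : Fin n, H i k • (1 : Matrix (Fin n) (Fin n) ℝ) k := by
      ext l
      simp [Matrix.one_apply, Finset.sum_ite_eq', Pi.smul_apply, mul_ite]
    have : detCM n (Function.update (idm n) i (H i))
        = ((1 : Matrix (Fin n) (Fin n) ℝ).updateRow i (H i)).det := rfl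
    rw [this]
    conv_lhs => rw [hHi]
    rw [Matrix.det_updateRow_sum]
    simp
  simp only [key, Matrix.trace]
  rfl

lemma hasFDerivAt_det_idm {n : ℕ} :
    HasFDerivAt (fun m : Fin n → Fin n → ℝ => (Matrix.of m).det)
      ((detCM n).linearDeriv (idm n)) (idm n) :=
  by exact (detCM n).hasFDerivAt (x := idm n)

open Function

section Jac

variable {n : ℕ}

local notation "E" => EuclideanSpace ℝ (Fin n)

noncomputable def bE (n : ℕ) : Module.Basis (Fin n) ℝ (EuclideanSpace ℝ (Fin n)) :=
  (EuclideanSpace.basisFun (Fin n) ℝ).toBasis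

noncomputable def Tm (n : ℕ) :
    (EuclideanSpace ℝ (Fin n) →L[ℝ] EuclideanSpace ℝ (Fin n)) →ₗ[ℝ] (Fin n → Fin n → ℝ) :=
  (LinearMap.toMatrix (bE n) (bE n)).toLinearMap ∘ₗ ContinuousLinearMap.coeLM ℝ

lemma Tm_apply (f : E →L[ℝ] E) :
    Tm n f = LinearMap.toMatrix (bE n) (bE n) f.toLinearMap := rfl

end Jac

section Jac2

variable {n : ℕ}

local notation "E" => EuclideanSpace ℝ (Fin n)

lemma jacobi_trace_zero (Φ : E → E) (hΦ : ContDiff ℝ 2 Φ)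
    (hdet : ∀ x, LinearMap.det (fderiv ℝ Φ x).toLinearMap = 1)
    (x₀ : E) (P : E →L[ℝ] E)
    (hP : P.comp (fderiv ℝ Φ x₀) = ContinuousLinearMap.id ℝ E)
    (u : E) :
    LinearMap.trace ℝ E
      ((P.comp (fderiv ℝ (fderiv ℝ Φ) x₀ u)).toLinearMap) = 0 := by
  classical
  set A : E → (E →L[ℝ] E) := fderiv ℝ Φ with hA
  have hA1 : ContDiff ℝ 1 A := hΦ.fderiv_right (le_refl 2)
  have h1 : HasFDerivAt A (fderiv ℝ A x₀) x₀ :=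
    ((hA1.differentiable one_ne_zero) x₀).hasFDerivAt
  set A' : E →L[ℝ] (E →L[ℝ] E) := fderiv ℝ A x₀ with hA'
  set cP : (E →L[ℝ] E) →L[ℝ] (E →L[ℝ] E) := ContinuousLinearMap.compL ℝ E E E P with hcP
  have h2 : HasFDerivAt (fun y => cP (A y)) (cP.comp A') x₀ :=
    (cP.hasFDerivAt).comp x₀ h1
  set Tc : (E →L[ℝ] E) →L[ℝ] (Fin n → Fin n → ℝ) := LinearMap.toContinuousLinearMap (Tm n)
    with hTc
  have h3 : HasFDerivAt (fun y => Tc (cP (A y))) (Tc.comp (cP.comp A')) x₀ :=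
    (Tc.hasFDerivAt).comp x₀ h2
  have hpoint : Tc (cP (A x₀)) = idm n := by
    show Tm n (P.comp (A x₀)) = idm n
    rw [hP]
    show LinearMap.toMatrix (bE n) (bE n) (ContinuousLinearMap.id ℝ E).toLinearMap = idm n
    rw [show (ContinuousLinearMap.id ℝ E).toLinearMap = LinearMap.id from rfl,
      LinearMap.toMatrix_id]
    rfl
  have h4 : HasFDerivAt (fun y => (Matrix.of (Tc (cP (A y)))).det)
      (((detCM n).linearDeriv (idm n)).comp (Tc.comp (cP.comp A'))) x₀ := by
    apply HasFDerivAt.comp x₀ _ h3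
    rw [hpoint]
    exact hasFDerivAt_det_idm
  have hconst : (fun y => (Matrix.of (Tc (cP (A y)))).det)
      = fun _ => LinearMap.det P.toLinearMap := by
    funext y
    have : (Matrix.of (Tc (cP (A y)))) = LinearMap.toMatrix (bE n) (bE n)
        ((P.comp (A y)).toLinearMap) := rfl
    rw [this, LinearMap.det_toMatrix, ContinuousLinearMap.toLinearMap_comp, LinearMap.det_comp,
      hdet y, mul_one]
  rw [hconst] at h4
  have h5 : (((detCM n).linearDeriv (idm n)).comp (Tc.comp (cP.comp A')))
      = (0 : E →L[ℝ] ℝ) := h4.unique (hasFDerivAt_const _ _)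
  have h6 := congrFun (congrArg (fun (L : E →L[ℝ] ℝ) => (L : E → ℝ)) h5) u
  simp only [ContinuousLinearMap.comp_apply, ContinuousLinearMap.zero_apply] at h6
  have h7 : (detCM n).linearDeriv (idm n) (Tc (cP (A' u))) = Matrix.trace (Matrix.of (Tc (cP (A' u)))) :=
    detCM_linearDeriv_one _
  rw [h7] at h6
  have h8 : Matrix.of (Tc (cP (A' u))) = LinearMap.toMatrix (bE n) (bE n)
      ((P.comp (A' u)).toLinearMap) := rfl
  rw [h8] at h6
  rw [LinearMap.trace_eq_matrix_trace ℝ (bE n)]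
  exact h6

end Jac2

section Main

variable {n : ℕ}

local notation "E" => EuclideanSpace ℝ (Fin n)

lemma laplace_aux
    (B B' : E → (E →ₗ[ℝ] E →ₗ[ℝ] ℝ))
    (hB1 : ∀ x v, (∀ w, B x v w = 0) → v = 0)
    (Φ Ψ : E → E)
    (hΦ : ContDiff ℝ 2 Φ) (hΨ : ContDiff ℝ 2 Ψ)
    (hΨΦ : LeftInverse Ψ Φ) (hΦΨ : RightInverse Ψ Φ)
    (hpres : ∀ x v w, B' (Φ x) (fderiv ℝ Φ x v) (fderiv ℝ Φ x w) = B x v w)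
    (hdet : ∀ x, LinearMap.det (fderiv ℝ Φ x).toLinearMap = 1)
    (F : E → ℝ) (hF : Differentiable ℝ F)
    (gF g : E → E) (hgFd : Differentiable ℝ gF) (hgd : Differentiable ℝ g)
    (hgF : ∀ x w, B' x (gF x) w = fderiv ℝ F x w)
    (hg : ∀ x w, B x (g x) w = fderiv ℝ (F ∘ Φ) x w) :
    ∀ x, LinearMap.trace ℝ E (fderiv ℝ g x).toLinearMap
      = LinearMap.trace ℝ E (fderiv ℝ gF (Φ x)).toLinearMap := by
  have hΦd : Differentiable ℝ Φ := hΦ.differentiable two_ne_zero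
  have hΨd : Differentiable ℝ Ψ := hΨ.differentiable two_ne_zero
  have hPA : ∀ y, (fderiv ℝ Ψ (Φ y)).comp (fderiv ℝ Φ y) = ContinuousLinearMap.id ℝ E := by
    intro y
    rw [← fderiv_comp y (hΨd.differentiableAt) (hΦd.differentiableAt),
      hΨΦ.comp_eq_id, fderiv_id]
  have hAP : ∀ y, (fderiv ℝ Φ y).comp (fderiv ℝ Ψ (Φ y)) = ContinuousLinearMap.id ℝ E := by
    intro y
    have := fderiv_comp (Φ y) (hΦd.differentiableAt) (hΨd.differentiableAt)
    rw [hΦΨ.comp_eq_id, fderiv_id, hΨΦ y] at this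
    exact this.symm
  have hAPapp : ∀ y u, fderiv ℝ Φ y (fderiv ℝ Ψ (Φ y) u) = u := by
    intro y u
    have := congrArg (fun (L : E →L[ℝ] E) => L u) (hAP y)
    simpa using this
  have hfd : ∀ y, fderiv ℝ (F ∘ Φ) y = (fderiv ℝ F (Φ y)).comp (fderiv ℝ Φ y) := by
    intro y
    exact fderiv_comp y (hF.differentiableAt) (hΦd.differentiableAt)
  have hgeq : ∀ y, g y = fderiv ℝ Ψ (Φ y) (gF (Φ y)) := by
    intro y
    have hz : ∀ w, B y (g y - fderiv ℝ Ψ (Φ y) (gF (Φ y))) w = 0 := by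
      intro w
      rw [map_sub, LinearMap.sub_apply]
      have e1 : B y (g y) w = B' (Φ y) (gF (Φ y)) (fderiv ℝ Φ y w) := by
        rw [hg y w, hfd y, ContinuousLinearMap.comp_apply, ← hgF (Φ y) (fderiv ℝ Φ y w)]
      have e2 : B y (fderiv ℝ Ψ (Φ y) (gF (Φ y))) w
          = B' (Φ y) (gF (Φ y)) (fderiv ℝ Φ y w) := by
        rw [← hpres y (fderiv ℝ Ψ (Φ y) (gF (Φ y))) w, hAPapp y]
      rw [e1, e2, sub_self]
    have := hB1 y _ hz
    rwa [sub_eq_zero] at this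
  have heq : (fun y => fderiv ℝ Φ y (g y)) = fun y => gF (Φ y) := by
    funext y
    rw [hgeq y, hAPapp y]
  intro x
  have hsym : IsSymmSndFDerivAt ℝ Φ x := hΦ.contDiffAt.isSymmSndFDerivAt (by simp)
  have hA1 : ContDiff ℝ 1 (fderiv ℝ Φ) := hΦ.fderiv_right (le_refl 2)
  set A' : E →L[ℝ] (E →L[ℝ] E) := fderiv ℝ (fderiv ℝ Φ) x with hA'
  have h1 : HasFDerivAt (fderiv ℝ Φ) A' x := ((hA1.differentiable one_ne_zero) x).hasFDerivAt
  set Dg : E →L[ℝ] E := fderiv ℝ g x with hDg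
  set DgF : E →L[ℝ] E := fderiv ℝ gF (Φ x) with hDgF
  have hL : HasFDerivAt (fun y => fderiv ℝ Φ y (g y))
      ((fderiv ℝ Φ x).comp Dg + A'.flip (g x)) x :=
    h1.clm_apply (hgd x).hasFDerivAt
  have hR : HasFDerivAt (fun y => gF (Φ y)) (DgF.comp (fderiv ℝ Φ x)) x :=
    (hgFd (Φ x)).hasFDerivAt.comp x (hΦd x).hasFDerivAt
  rw [heq] at hL
  have key : (fderiv ℝ Φ x).comp Dg + A'.flip (g x) = DgF.comp (fderiv ℝ Φ x) :=
    hL.unique hR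
  set P : E →L[ℝ] E := fderiv ℝ Ψ (Φ x) with hP
  have key2 : Dg = P.comp (DgF.comp (fderiv ℝ Φ x)) - P.comp (A'.flip (g x)) := by
    have h := congrArg (fun (L : E →L[ℝ] E) => P.comp L) key
    simp only [ContinuousLinearMap.comp_add] at h
    rw [← ContinuousLinearMap.comp_assoc, hPA x, ContinuousLinearMap.id_comp] at h
    rw [← h]
    abel
  have hflip : A'.flip (g x) = A' (g x) :=
    ContinuousLinearMap.ext fun v => hsym.eq v (g x)
  have trace2 : LinearMap.trace ℝ E ((P.comp (A'.flip (g x))).toLinearMap) = 0 := by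
    rw [hflip]
    exact jacobi_trace_zero Φ hΦ hdet x P (hPA x) (g x)
  have trace1 : LinearMap.trace ℝ E ((P.comp (DgF.comp (fderiv ℝ Φ x))).toLinearMap)
      = LinearMap.trace ℝ E DgF.toLinearMap := by
    rw [ContinuousLinearMap.toLinearMap_comp, ContinuousLinearMap.toLinearMap_comp,
      LinearMap.trace_comp_comm', LinearMap.comp_assoc]
    have : (fderiv ℝ Φ x).toLinearMap ∘ₗ P.toLinearMap = LinearMap.id := by
      rw [← ContinuousLinearMap.toLinearMap_comp, hAP x]; rfl
    rw [this, LinearMap.comp_id]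
  rw [key2]
  rw [ContinuousLinearMap.coe_sub, map_sub, trace1, trace2, sub_zero]

end Main

/-- Left and right Laplacians are natural under volume-preserving geometromorphisms:
`Δ^{L/R}_B (F ∘ Φ) = (Δ^{L/R}_{B'} F) ∘ Φ`. -/
theorem laplacian_natural_under_geometromorphism {n : ℕ}
    (B B' : EuclideanSpace ℝ (Fin n) →
      (EuclideanSpace ℝ (Fin n) →ₗ[ℝ] EuclideanSpace ℝ (Fin n) →ₗ[ℝ] ℝ))
    (hB1 : ∀ x v, (∀ w, B x v w = 0) → v = 0)
    (hB2 : ∀ x w, (∀ v, B x v w = 0) → w = 0)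
    (hB'1 : ∀ x v, (∀ w, B' x v w = 0) → v = 0)
    (hB'2 : ∀ x w, (∀ v, B' x v w = 0) → w = 0)
    (Φ Ψ : EuclideanSpace ℝ (Fin n) → EuclideanSpace ℝ (Fin n))
    (hΦ : ContDiff ℝ 2 Φ) (hΨ : ContDiff ℝ 2 Ψ)
    (hΨΦ : LeftInverse Ψ Φ) (hΦΨ : RightInverse Ψ Φ)
    (hpres : ∀ x v w, B' (Φ x) (fderiv ℝ Φ x v) (fderiv ℝ Φ x w) = B x v w)
    (hdet : ∀ x, LinearMap.det (fderiv ℝ Φ x).toLinearMap = 1)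
    (F : EuclideanSpace ℝ (Fin n) → ℝ) (hF : Differentiable ℝ F) :
    (∀ gF g : EuclideanSpace ℝ (Fin n) → EuclideanSpace ℝ (Fin n),
      Differentiable ℝ gF → Differentiable ℝ g →
      (∀ x w, B' x (gF x) w = fderiv ℝ F x w) →
      (∀ x w, B x (g x) w = fderiv ℝ (F ∘ Φ) x w) →
      ∀ x, LinearMap.trace ℝ (EuclideanSpace ℝ (Fin n)) (fderiv ℝ g x).toLinearMap =
        LinearMap.trace ℝ (EuclideanSpace ℝ (Fin n)) (fderiv ℝ gF (Φ x)).toLinearMap) ∧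
    (∀ gF g : EuclideanSpace ℝ (Fin n) → EuclideanSpace ℝ (Fin n),
      Differentiable ℝ gF → Differentiable ℝ g →
      (∀ x w, B' x w (gF x) = fderiv ℝ F x w) →
      (∀ x w, B x w (g x) = fderiv ℝ (F ∘ Φ) x w) →
      ∀ x, LinearMap.trace ℝ (EuclideanSpace ℝ (Fin n)) (fderiv ℝ g x).toLinearMap =
        LinearMap.trace ℝ (EuclideanSpace ℝ (Fin n)) (fderiv ℝ gF (Φ x)).toLinearMap) := by
  constructor
  · intro gF g hgFd hgd hgF hg
    exact laplace_aux B B' hB1 Φ Ψ hΦ hΨ hΨΦ hΦΨ hpres hdet F hF gF g hgFd hgd hgF hg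
  · intro gF g hgFd hgd hgF hg
    refine laplace_aux (fun x => (B x).flip) (fun x => (B' x).flip)
      (fun x v hv => hB2 x v (fun w => hv w)) Φ Ψ hΦ hΨ hΨΦ hΦΨ
      (fun x v w => hpres x w v) hdet F hF gF g hgFd hgd
      (fun x w => hgF x w) (fun x w => hg x w)
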